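/- If Ψ is an m-order n-dimensional real symmetric tensor, then the entanglement eigenvalue Q(Ψ) (the largest Q-eigenvalue) is greater than or equal to the Z-spectral radius Z(Ψ) (the largest absolute value of a Z-eigenvalue). -/

import Mathlib

open Finset

noncomputable section

/-- Contraction `T z^m` of an `(m+1)`-order tensor with entries in `ℂ`. -/
def tapplyC {m : ℕ} {ι : Type} [Fintype ι] (T : (Fin (m + 1) → ι) → ℂ)
    (z : ι → ℂ) : ι → ℂ :=
  fun i => ∑ f : Fin m → ι, T (Fin.cons i f) * ∏ j, z (f j)

/-- Contraction `T x^m` of an `(m+1)`-order tensor with entries in `ℝ`. -/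
def tapplyR {m : ℕ} {ι : Type} [Fintype ι] (T : (Fin (m + 1) → ι) → ℝ)
    (x : ι → ℝ) : ι → ℝ :=
  fun i => ∑ f : Fin m → ι, T (Fin.cons i f) * ∏ j, x (f j)

/-- A tensor is symmetric if its entries are invariant under index permutations. -/
def SymmT {m : ℕ} {ι R : Type} (T : (Fin m → ι) → R) : Prop :=
  ∀ (σ : Equiv.Perm (Fin m)) (f : Fin m → ι), T (f ∘ σ) = T f

/-- `lam` is a Q-eigenvalue of the complex tensor `T` with Q-eigenvector `z`:
`T z^{m} = lam * conj z` and `z̄ᵀ z = 1`. -/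
def IsQEig {m : ℕ} {ι : Type} [Fintype ι] (T : (Fin (m + 1) → ι) → ℂ)
    (lam : ℝ) (z : ι → ℂ) : Prop :=
  tapplyC T z = (fun i => (lam : ℂ) * (starRingEnd ℂ) (z i)) ∧
    ∑ i, (starRingEnd ℂ) (z i) * z i = 1

/-- `lam` is a Z-eigenvalue of the real tensor `T` with Z-eigenvector `x`. -/
def IsZEig {m : ℕ} {ι : Type} [Fintype ι] (T : (Fin (m + 1) → ι) → ℝ)
    (lam : ℝ) (x : ι → ℝ) : Prop :=
  tapplyR T x = (fun i => lam * x i) ∧ ∑ i, x i ^ 2 = 1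

/-- Complexification of a real tensor. -/
def toC {m : ℕ} {ι : Type} (T : (Fin (m + 1) → ι) → ℝ) :
    (Fin (m + 1) → ι) → ℂ := fun f => ((T f : ℝ) : ℂ)

/-- The entanglement eigenvalue of a real tensor: largest Q-eigenvalue. -/
def QmaxR {m : ℕ} {ι : Type} [Fintype ι] (T : (Fin (m + 1) → ι) → ℝ) : ℝ :=
  sSup {lam : ℝ | ∃ z : ι → ℂ, IsQEig (toC T) lam z}

/-- The Z-spectral radius of a real tensor: largest `|λ|` over Z-eigenvalues. -/
def Zrad {m : ℕ} {ι : Type} [Fintype ι] (T : (Fin (m + 1) → ι) → ℝ) : ℝ :=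
  sSup {r : ℝ | ∃ (lam : ℝ) (x : ι → ℝ), IsZEig T lam x ∧ r = |lam|}

/-- Frobenius norm of a real tensor. -/
def fnorm {m : ℕ} {ι : Type} [Fintype ι] (T : (Fin m → ι) → ℝ) : ℝ :=
  Real.sqrt (∑ f : Fin m → ι, T f ^ 2)

/-- Split a sum over `Fin (m+1) → ι` into head and tail. -/
lemma sum_cons_split {m : ℕ} {ι : Type} [Fintype ι] [DecidableEq ι]
    {M : Type} [AddCommMonoid M] (F : (Fin (m + 1) → ι) → M) :
    ∑ g : Fin (m + 1) → ι, F g = ∑ i : ι, ∑ f : Fin m → ι, F (Fin.cons i f) := by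
  calc ∑ g : Fin (m + 1) → ι, F g
      = ∑ p : ι × (Fin m → ι), F (Fin.cons p.1 p.2) :=
        (Fintype.sum_equiv (Fin.consEquiv fun _ => ι)
          (fun p => F (Fin.cons p.1 p.2)) F (fun p => rfl)).symm
    _ = ∑ i : ι, ∑ f : Fin m → ι, F (Fin.cons i f) := Fintype.sum_prod_type _

/-- Q-eigenvalues of a real tensor are bounded by the Frobenius norm. -/
lemma qeig_abs_le_fnorm {m : ℕ} {ι : Type} [Fintype ι] (T : (Fin (m + 1) → ι) → ℝ)
    {lam : ℝ} {z : ι → ℂ} (h : IsQEig (toC T) lam z) : |lam| ≤ fnorm T := by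
  classical
  have key : (lam : ℂ) = ∑ g : Fin (m + 1) → ι, (T g : ℂ) * ∏ j, z (g j) := by
    have h1 : ∀ i, tapplyC (toC T) z i = (lam : ℂ) * (starRingEnd ℂ) (z i) :=
      fun i => congrFun h.1 i
    calc (lam : ℂ) = (lam : ℂ) * ∑ i, (starRingEnd ℂ) (z i) * z i := by rw [h.2, mul_one]
      _ = ∑ i, z i * tapplyC (toC T) z i := by
          rw [mul_sum]
          refine Finset.sum_congr rfl fun i _ => ?_
          rw [h1 i]; ring
      _ = ∑ g : Fin (m + 1) → ι, (T g : ℂ) * ∏ j, z (g j) := by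
          rw [sum_cons_split (fun g => (T g : ℂ) * ∏ j, z (g j))]
          refine Finset.sum_congr rfl fun i _ => ?_
          unfold tapplyC toC
          rw [mul_sum]
          refine Finset.sum_congr rfl fun f _ => ?_
          rw [Fin.prod_univ_succ]
          simp only [Fin.cons_zero, Fin.cons_succ]
          ring
  have hnorm : ∑ i, Complex.normSq (z i) = 1 := by
    have := h.2
    have : ((∑ i, Complex.normSq (z i) : ℝ) : ℂ) = 1 := by
      push_cast
      rw [← this]
      congr 1; ext i
      rw [← Complex.normSq_eq_conj_mul_self]
    exact_mod_cast this
  have habs : |lam| ≤ ∑ g : Fin (m + 1) → ι, |T g| * ∏ j, ‖z (g j)‖ := by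
    calc |lam| = ‖(lam : ℂ)‖ := by rw [Complex.norm_real, Real.norm_eq_abs]
      _ = ‖∑ g : Fin (m + 1) → ι, (T g : ℂ) * ∏ j, z (g j)‖ := by rw [← key]
      _ ≤ ∑ g : Fin (m + 1) → ι, ‖(T g : ℂ) * ∏ j, z (g j)‖ :=
          norm_sum_le _ _
      _ = ∑ g : Fin (m + 1) → ι, |T g| * ∏ j, ‖z (g j)‖ := by
          congr 1; ext g
          rw [norm_mul, Complex.norm_real, Real.norm_eq_abs, norm_prod]
  have hb2 : ∑ g : Fin (m + 1) → ι, (∏ j, ‖z (g j)‖) ^ 2 = 1 := by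
    have : ∑ g : Fin (m + 1) → ι, (∏ j, ‖z (g j)‖) ^ 2
        = (∑ i, Complex.normSq (z i)) ^ (m + 1) := by
      rw [Fintype.sum_pow]
      congr 1; ext g
      rw [← Finset.prod_pow]
      congr 1; ext j
      rw [Complex.sq_norm]
    rw [this, hnorm, one_pow]
  have hcs : (∑ g : Fin (m + 1) → ι, |T g| * ∏ j, ‖z (g j)‖) ^ 2
      ≤ (∑ g : Fin (m + 1) → ι, |T g| ^ 2) * 1 := by
    rw [← hb2]
    exact Finset.sum_mul_sq_le_sq_mul_sq _ _ _
  have hsum : ∑ g : Fin (m + 1) → ι, |T g| ^ 2 = ∑ g : Fin (m + 1) → ι, T g ^ 2 := by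
    congr 1; ext g; rw [sq_abs]
  rw [mul_one, hsum] at hcs
  refine le_trans habs ?_
  rw [fnorm, show (∑ g : Fin (m+1) → ι, |T g| * ∏ j, ‖z (g j)‖)
      = |∑ g : Fin (m+1) → ι, |T g| * ∏ j, ‖z (g j)‖| from
      (abs_of_nonneg (Finset.sum_nonneg fun g _ => mul_nonneg (abs_nonneg _)
        (Finset.prod_nonneg fun j _ => norm_nonneg _))).symm]
  exact (Real.le_sqrt (abs_nonneg _)
    (Finset.sum_nonneg fun g _ => sq_nonneg _)).mpr (by rwa [sq_abs])

/-- Rotation: if `lam` is a Q-eigenvalue, so is `|lam|`. -/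
lemma exists_qeig_abs {m : ℕ} {ι : Type} [Fintype ι] (T : (Fin (m + 1) → ι) → ℂ)
    {lam : ℝ} {z : ι → ℂ} (h : IsQEig T lam z) : ∃ z' : ι → ℂ, IsQEig T |lam| z' := by
  rcases le_or_gt 0 lam with hl | hl
  · exact ⟨z, by rwa [abs_of_nonneg hl]⟩
  · set w : ℂ := (Real.pi / (m + 1)) * Complex.I with hw
    set c : ℂ := Complex.exp w with hc
    have hconjw : (starRingEnd ℂ) w = -w := by
      rw [hw]
      simp only [map_mul, map_div₀, Complex.conj_ofReal, Complex.conj_I, map_add,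
        map_one, map_natCast]
      ring
    have hcu : (starRingEnd ℂ) c * c = 1 := by
      rw [hc, ← Complex.exp_conj, hconjw, ← Complex.exp_add, neg_add_cancel,
        Complex.exp_zero]
    have hc0 : c ≠ 0 := Complex.exp_ne_zero _
    have hcpow : c ^ (m + 1) = -1 := by
      rw [hc, ← Complex.exp_nat_mul]
      have hne : ((m : ℂ) + 1) ≠ 0 := by
        have : ((m : ℂ) + 1) = ((m + 1 : ℕ) : ℂ) := by push_cast; ring
        rw [this]
        exact Nat.cast_ne_zero.mpr (Nat.succ_ne_zero m)
      have : ((m + 1 : ℕ) : ℂ) * w = Real.pi * Complex.I := by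
        rw [hw]
        push_cast
        field_simp
      rw [this, Complex.exp_pi_mul_I]
    have hckey : c ^ m * (lam : ℂ) = ((|lam| : ℝ) : ℂ) * (starRingEnd ℂ) c := by
      have h1 : c ^ m * c = -1 := by rw [← pow_succ, hcpow]
      have h2 : (starRingEnd ℂ) c = c⁻¹ := eq_inv_of_mul_eq_one_left hcu
      have h3 : c ^ m = -c⁻¹ := by
        have h4 : (-c⁻¹) * c = -1 := by field_simp
        exact mul_right_cancel₀ hc0 (h1.trans h4.symm)
      rw [h2, abs_of_neg hl, h3]
      push_cast
      ring
    refine ⟨fun i => c * z i, ?_, ?_⟩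
    · funext i
      have : tapplyC T (fun i => c * z i) i = c ^ m * tapplyC T z i := by
        unfold tapplyC
        rw [mul_sum]
        congr 1; ext f
        rw [Finset.prod_mul_distrib, Finset.prod_const, Finset.card_univ, Fintype.card_fin]
        ring
      rw [this, h.1]
      simp only [map_mul]
      calc c ^ m * ((lam : ℂ) * (starRingEnd ℂ) (z i))
          = (c ^ m * (lam : ℂ)) * (starRingEnd ℂ) (z i) := by ring
        _ = (((|lam| : ℝ) : ℂ) * (starRingEnd ℂ) c) * (starRingEnd ℂ) (z i) := by rw [hckey]
        _ = ((|lam| : ℝ) : ℂ) * ((starRingEnd ℂ) c * (starRingEnd ℂ) (z i)) := by ring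
    · calc ∑ i, (starRingEnd ℂ) (c * z i) * (c * z i)
          = ((starRingEnd ℂ) c * c) * ∑ i, (starRingEnd ℂ) (z i) * z i := by
            rw [mul_sum]; congr 1; ext i; rw [map_mul]; ring
        _ = 1 := by rw [hcu, one_mul, h.2]

/-- A Z-eigenpair gives a Q-eigenpair with the same eigenvalue. -/
lemma zeig_to_qeig {m : ℕ} {ι : Type} [Fintype ι] (T : (Fin (m + 1) → ι) → ℝ)
    {lam : ℝ} {x : ι → ℝ} (h : IsZEig T lam x) :
    IsQEig (toC T) lam (fun i => (x i : ℂ)) := by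
  constructor
  · funext i
    have : tapplyC (toC T) (fun i => (x i : ℂ)) i = ((tapplyR T x i : ℝ) : ℂ) := by
      unfold tapplyC tapplyR toC
      push_cast
      rfl
    rw [this, h.1]
    simp [Complex.conj_ofReal]
  · have := h.2
    calc ∑ i, (starRingEnd ℂ) ((x i : ℂ)) * (x i : ℂ)
        = ((∑ i, x i ^ 2 : ℝ) : ℂ) := by
          push_cast
          congr 1; ext i
          rw [Complex.conj_ofReal]; ring
      _ = 1 := by rw [this]; norm_num

/-- entanglement eigenvalue ≥ Z-spectral radius for real symmetric tensors. -/
theorem Qmax_ge_Zrad {m n : ℕ} (hm : 1 ≤ m)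
    (Ψ : (Fin (m + 1) → Fin n) → ℝ) (hΨ : SymmT Ψ) :
    Zrad Ψ ≤ QmaxR Ψ := by
  classical
  set SQ : Set ℝ := {lam : ℝ | ∃ z : Fin n → ℂ, IsQEig (toC Ψ) lam z} with hSQ
  set SZ : Set ℝ := {r : ℝ | ∃ (lam : ℝ) (x : Fin n → ℝ), IsZEig Ψ lam x ∧ r = |lam|} with hSZ
  have hbdd : BddAbove SQ := by
    refine ⟨fnorm Ψ, fun lam hlam => ?_⟩
    obtain ⟨z, hz⟩ := hlam
    exact le_trans (le_abs_self lam) (qeig_abs_le_fnorm Ψ hz)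
  have hsub : SZ ⊆ SQ := by
    rintro r ⟨lam, x, hzx, rfl⟩
    obtain ⟨z', hz'⟩ := exists_qeig_abs (toC Ψ) (zeig_to_qeig Ψ hzx)
    exact ⟨z', hz'⟩
  rcases Set.eq_empty_or_nonempty SZ with hne | hne
  · rw [Zrad, ← hSZ, hne, Real.sSup_empty]
    rcases Set.eq_empty_or_nonempty SQ with hq | hq
    · rw [QmaxR, ← hSQ, hq, Real.sSup_empty]
    · obtain ⟨lam, z, hz⟩ := hq
      obtain ⟨z', hz'⟩ := exists_qeig_abs (toC Ψ) hz
      have : |lam| ∈ SQ := ⟨z', hz'⟩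
      exact le_trans (abs_nonneg lam) (le_csSup hbdd this)
  · exact csSup_le_csSup hbdd hne hsub
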